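/- Let m, r_1, ..., r_p be positive integers with gcd(m, r_1, ..., r_p) = 1, and let S = ⟨m, m+r_1, ..., m+r_p⟩. Then the MED closure of S equals (m + ⟨m, r_1, ..., r_p⟩) ∪ {0}, i.e., the set consisting of 0 together with m plus any nonnegative integer combination of m, r_1, ..., r_p. -/

import Mathlib

/-- A numerical semigroup: an additive submonoid of ℕ with finite complement. -/
structure NumSgp where
  carrier : Set ℕ
  zero_mem : 0 ∈ carrier
  add_mem : ∀ ⦃a b : ℕ⦄, a ∈ carrier → b ∈ carrier → a + b ∈ carrier
  cofinite : carrierᶜ.Finite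

/-- The multiplicity: the smallest nonzero element. -/
noncomputable def NumSgp.mult (S : NumSgp) : ℕ := sInf {n | n ∈ S.carrier ∧ n ≠ 0}

/-- The Apéry set of `S` with respect to `s`: elements `x ∈ S` with `x - s ∉ S`
(over the integers, i.e. there is no `y ∈ S` with `y + s = x`). -/
def NumSgp.Ap (S : NumSgp) (s : ℕ) : Set ℕ :=
  {x | x ∈ S.carrier ∧ ∀ y ∈ S.carrier, y + s ≠ x}

/-- `z` is an Arf element of `S`. -/
def NumSgp.ArfElem (S : NumSgp) (z : ℕ) : Prop :=
  ∀ x ∈ S.carrier, ∀ y ∈ S.carrier, z ≤ x → z ≤ y → x + y - z ∈ S.carrier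

/-- The minimal generating set: nonzero elements not expressible as a sum of two
nonzero elements of `S`. -/
def NumSgp.minGen (S : NumSgp) : Set ℕ :=
  {x | x ∈ S.carrier ∧ x ≠ 0 ∧ ∀ a ∈ S.carrier, ∀ b ∈ S.carrier, a ≠ 0 → b ≠ 0 → a + b ≠ x}

/-- The embedding dimension: the cardinality of the minimal generating set. -/
noncomputable def NumSgp.edim (S : NumSgp) : ℕ := S.minGen.ncard

/-- The Frobenius number: the largest gap. -/
noncomputable def NumSgp.frob (S : NumSgp) : ℕ := sSup S.carrierᶜ

/-- The conductor: the smallest `c` with `c + ℤ≥0 ⊆ S`. -/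
noncomputable def NumSgp.cond (S : NumSgp) : ℕ := sInf {c | ∀ n, c ≤ n → n ∈ S.carrier}

/-- The genus: the number of gaps. -/
noncomputable def NumSgp.genus (S : NumSgp) : ℕ := S.carrierᶜ.ncard

/-- The set of pseudo-Frobenius numbers. -/
def NumSgp.PF (S : NumSgp) : Set ℕ :=
  {x | x ∉ S.carrier ∧ ∀ s ∈ S.carrier, s ≠ 0 → x + s ∈ S.carrier}

/-- The type of `S`: the number of pseudo-Frobenius numbers. -/
noncomputable def NumSgp.type (S : NumSgp) : ℕ := S.PF.ncard

/-- `S` is a MED semigroup: its multiplicity is an Arf element, i.e. for all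
`x, y ∈ S` with `x, y ≥ m(S)`, `x + y - m(S) ∈ S`. -/
def NumSgp.IsMED (S : NumSgp) : Prop := S.ArfElem S.mult

/-- The MED closure of `S`: the intersection of all MED numerical semigroups
containing `S` with the same multiplicity. -/
def NumSgp.MEDclosure (S : NumSgp) : Set ℕ :=
  ⋂ T ∈ {T : NumSgp | S.carrier ⊆ T.carrier ∧ T.mult = S.mult ∧ T.IsMED}, T.carrier

theorem med_closure_formula (m p : ℕ) (r : Fin p → ℕ) (hm : 0 < m)
    (hrpos : ∀ i, 0 < r i)
    (hgcd : Nat.gcd m (Finset.univ.gcd r) = 1)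
    (S : NumSgp)
    (hS : S.carrier = ↑(AddSubmonoid.closure ({m} ∪ Set.range (fun i => m + r i)))) :
    S.MEDclosure =
      {0} ∪ {x : ℕ | ∃ y ∈ AddSubmonoid.closure ({m} ∪ Set.range r), x = m + y} := by
  set T : AddSubmonoid ℕ := AddSubmonoid.closure ({m} ∪ Set.range r) with hT
  set C : Set ℕ := {0} ∪ {x : ℕ | ∃ y ∈ T, x = m + y} with hC
  -- basic memberships
  have hmS : m ∈ S.carrier := by
    rw [hS]; exact AddSubmonoid.subset_closure (Or.inl rfl)
  have hmmS : m + m ∈ S.carrier := S.add_mem hmS hmS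
  have hmriS : ∀ i, m + r i ∈ S.carrier := fun i => by
    rw [hS]; exact AddSubmonoid.subset_closure (Or.inr ⟨i, rfl⟩)
  -- every nonzero element of S is ≥ m
  have hSge : ∀ x ∈ S.carrier, x = 0 ∨ m ≤ x := by
    intro x hx
    rw [hS, SetLike.mem_coe] at hx
    induction hx using AddSubmonoid.closure_induction with
    | mem y hy =>
      rcases hy with hy | ⟨i, rfl⟩
      · rw [Set.mem_singleton_iff] at hy; omega
      · right; show m ≤ m + r i; omega
    | zero => left; rfl
    | add a b _ _ iha ihb => rcases iha with h | h <;> rcases ihb with h' | h' <;> omega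
  -- S.mult = m
  have hSmult : S.mult = m := by
    unfold NumSgp.mult
    apply le_antisymm
    · exact Nat.sInf_le (show m ∈ {n | n ∈ S.carrier ∧ n ≠ 0} from ⟨hmS, hm.ne'⟩)
    · refine le_csInf ⟨m, hmS, hm.ne'⟩ ?_
      rintro n ⟨hn, hn0⟩
      rcases hSge n hn with h | h
      · exact absurd h hn0
      · exact h
  -- C contains S
  have hmC : m ∈ C := Or.inr ⟨0, T.zero_mem, (add_zero m).symm⟩
  have hCadd : ∀ a ∈ C, ∀ b ∈ C, a + b ∈ C := by
    rintro a (rfl | ⟨y, hy, rfl⟩) b hb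
    · simpa using hb
    · rcases hb with rfl | ⟨z, hz, rfl⟩
      · exact Or.inr ⟨y, hy, by omega⟩
      · refine Or.inr ⟨y + (m + z), ?_, by omega⟩
        exact T.add_mem hy (T.add_mem (AddSubmonoid.subset_closure (Or.inl rfl)) hz)
  have hSC : S.carrier ⊆ C := by
    intro x hx
    rw [hS, SetLike.mem_coe] at hx
    induction hx using AddSubmonoid.closure_induction with
    | mem y hy =>
      rcases hy with hy | ⟨i, rfl⟩
      · rw [Set.mem_singleton_iff] at hy; exact hy ▸ hmC
      · exact Or.inr ⟨r i, AddSubmonoid.subset_closure (Or.inr ⟨i, rfl⟩), rfl⟩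
    | zero => exact Or.inl rfl
    | add a b _ _ iha ihb => exact hCadd a iha b ihb
  -- C as a NumSgp
  have hCge : ∀ x ∈ C, x = 0 ∨ m ≤ x := by
    rintro x (rfl | ⟨y, hy, rfl⟩)
    · left; rfl
    · right; omega
  set T0 : NumSgp :=
    { carrier := C
      zero_mem := Or.inl rfl
      add_mem := fun a b ha hb => hCadd a ha b hb
      cofinite := S.cofinite.subset (Set.compl_subset_compl.2 hSC) } with hT0
  have hT0mult : T0.mult = m := by
    unfold NumSgp.mult
    apply le_antisymm
    · exact Nat.sInf_le (show m ∈ {n | n ∈ T0.carrier ∧ n ≠ 0} from ⟨hmC, hm.ne'⟩)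
    · refine le_csInf ⟨m, hmC, hm.ne'⟩ ?_
      rintro n ⟨hn, hn0⟩
      rcases hCge n hn with h | h
      · exact absurd h hn0
      · exact h
  have hT0MED : T0.IsMED := by
    intro x hx y hy hx' hy'
    rw [hT0mult] at hx' hy' ⊢
    rcases hx with rfl | ⟨a, ha, rfl⟩
    · omega
    rcases hy with rfl | ⟨b, hb, rfl⟩
    · omega
    refine Or.inr ⟨a + b, T.add_mem ha hb, ?_⟩
    omega
  have hT0mem : T0 ∈ {U : NumSgp | S.carrier ⊆ U.carrier ∧ U.mult = S.mult ∧ U.IsMED} :=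
    ⟨hSC, by rw [hT0mult, hSmult], hT0MED⟩
  -- conclusion
  apply Set.Subset.antisymm
  · intro x hx
    rw [NumSgp.MEDclosure, Set.mem_iInter₂] at hx
    exact hx T0 hT0mem
  · intro x hx
    rw [NumSgp.MEDclosure, Set.mem_iInter₂]
    rintro U ⟨hU1, hU2, hU3⟩
    rw [hSmult] at hU2
    rcases hx with rfl | ⟨y, hy, rfl⟩
    · exact U.zero_mem
    · induction hy using AddSubmonoid.closure_induction with
      | mem z hz =>
        rcases hz with hz | ⟨i, rfl⟩
        · rw [Set.mem_singleton_iff] at hz; subst hz; exact hU1 hmmS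
        · exact hU1 (hmriS i)
      | zero => exact hU1 hmS
      | add a b ha hb iha ihb =>
        have h1 : U.mult ≤ m + a := by rw [hU2]; omega
        have h2 : U.mult ≤ m + b := by rw [hU2]; omega
        have := hU3 (m + a) iha (m + b) ihb h1 h2
        rw [hU2] at this
        have heq : m + a + (m + b) - m = m + (a + b) := by omega
        rwa [heq] at this
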